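/- Let V be a finite set, let s_1, …, s_k ∈ V be distinct terminals, and let x be a fractional allocation on V with x(s_i,i) = 1 for each i. Let e ⊆ V be a nonempty hyperedge with designated representative r(e) ∈ e and let d(e) = Σ_{i=1}^k (x(r(e),i) − min_{v ∈ e} x(v,i)). Consider the CKR rounding: pick a permutation π of {1,…,k} uniformly at random and θ ∈ [0,1) uniformly at random, and set A_{π(i)} = {v : x(v,π(i)) ≥ θ} \ (A_{π(1)} ∪ ⋯ ∪ A_{π(i−1)}) for i = 1,…,k−1 and A_{π(k)} = V \ (A_{π(1)} ∪ ⋯ ∪ A_{π(k−1)}). Then the probability that e is not entirely contained in a single part A_j is at most H_{|e|} · d(e), where H_m = Σ_{j=1}^m 1/j. -/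

import Mathlib

open scoped BigOperators

/-- `min_{v ∈ e} g(v)` (with junk value `0` for `e = ∅`). -/
noncomputable def fmin {V : Type*} (e : Finset V) (g : V → ℝ) : ℝ :=
  if h : e.Nonempty then e.inf' h g else 0

/-- In CKR rounding with permutation `π` and threshold `θ`, the position (in the
order given by `π`) of the part to which vertex `v` is assigned: the smallest
position `i` among the first `k−1` positions with `x(v, π(i)) ≥ θ`, and the last
position `k−1` if there is none (the leftover part `A_{π(k)}`). -/
noncomputable def ckrPos {V : Type*} (k : ℕ) (hk : 0 < k)
    (x : V → Fin k → ℝ) (π : Equiv.Perm (Fin k)) (θ : ℝ) (v : V) : Fin k :=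
  if h : (Finset.univ.filter (fun i : Fin k => (i : ℕ) < k - 1 ∧ θ ≤ x v (π i))).Nonempty
  then (Finset.univ.filter (fun i : Fin k => (i : ℕ) < k - 1 ∧ θ ≤ x v (π i))).min' h
  else ⟨k - 1, Nat.sub_lt hk one_pos⟩

/-- **CKR rounding splits a hyperedge with probability at most `H_{|e|} · d(e)`.**
Let `x` be a fractional allocation on `V` with distinct terminals `s_i` and
`x(s_i,i) = 1`, and let `e ⊆ V` be a nonempty hyperedge with representative
`r(e) ∈ e` and `d(e) = ∑_i (x(r(e),i) − min_{v∈e} x(v,i))`. In CKR rounding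
(uniformly random permutation `π` of the labels and uniformly random `θ ∈ [0,1)`),
the probability that `e` is not entirely contained in a single part is at most
`H_{|e|} · d(e)`, where `H_m = ∑_{j=1}^m 1/j`. -/
lemma harmonic_aux : ∀ (N : ℕ) (S : Finset ℕ), (∀ m ∈ S, 1 ≤ m) → S.card ≤ N →
    ∑ m ∈ S, (1:ℝ)/m ≤ ∑ j ∈ Finset.range N, (1:ℝ)/(j+1) := by
  intro N
  induction N with
  | zero =>
    intro S hS hcard
    simp only [Nat.le_zero, Finset.card_eq_zero] at hcard
    subst hcard; simp
  | succ n ih =>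
    intro S hS hcard
    by_cases hle : S.card ≤ n
    · refine (ih S hS hle).trans ?_
      rw [Finset.sum_range_succ]
      have : 0 ≤ (1:ℝ)/(n+1) := by positivity
      linarith
    · have hScard : S.card = n + 1 := le_antisymm hcard (not_le.mp hle)
      have hne : S.Nonempty := Finset.card_pos.mp (by omega)
      set M := S.max' hne with hM
      have hMmem : M ∈ S := S.max'_mem hne
      have hMbig : n + 1 ≤ M := by
        have hsub : S ⊆ Finset.Icc 1 M := by
          intro m hm
          exact Finset.mem_Icc.mpr ⟨hS m hm, S.le_max' m hm⟩
        have := Finset.card_le_card hsub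
        rwa [Nat.card_Icc, hScard, Nat.add_sub_cancel] at this
      have herase : (S.erase M).card ≤ n := by
        rw [Finset.card_erase_of_mem hMmem, hScard]; omega
      have hrec := ih (S.erase M) (fun m hm => hS m (Finset.mem_of_mem_erase hm)) herase
      have hsum : ∑ m ∈ S.erase M, (1:ℝ)/m + 1/M = ∑ m ∈ S, (1:ℝ)/m :=
        Finset.sum_erase_add S _ hMmem
      have hlast : (1:ℝ)/M ≤ 1/(n+1) := by
        apply one_div_le_one_div_of_le (by positivity)
        exact_mod_cast hMbig
      rw [Finset.sum_range_succ, ← hsum]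
      push_cast
      linarith

lemma perm_count {k : ℕ} (R : Finset (Fin k)) {c : Fin k} (hc : c ∈ R) :
    (Finset.univ.filter
        (fun π : Equiv.Perm (Fin k) => ∀ j ∈ R, π.symm c ≤ π.symm j)).card * R.card
      ≤ Nat.factorial k := by
  classical
  set A := Finset.univ.filter
    (fun π : Equiv.Perm (Fin k) => ∀ j ∈ R, π.symm c ≤ π.symm j) with hA
  set B : Fin k → Finset (Equiv.Perm (Fin k)) := fun c' =>
    Finset.univ.filter (fun τ => ∀ j ∈ R, τ.symm c' ≤ τ.symm j) with hB
  have hcardB : ∀ c' ∈ R, A.card ≤ (B c').card := by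
    intro c' hc'
    have himg : A.image (fun π => Equiv.swap c c' * π) ⊆ B c' := by
      intro τ hτ
      rw [Finset.mem_image] at hτ
      obtain ⟨π, hπ, rfl⟩ := hτ
      rw [hA, Finset.mem_filter] at hπ
      rw [hB, Finset.mem_filter]
      refine ⟨Finset.mem_univ _, ?_⟩
      intro j hj
      have hsymm : (Equiv.swap c c' * π).symm = π.symm * Equiv.swap c c' := by
        simp [← Equiv.Perm.inv_def, mul_inv_rev, Equiv.swap_inv]
      rw [hsymm]
      simp only [Equiv.Perm.mul_apply]
      rw [Equiv.swap_apply_right]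
      have hjR : Equiv.swap c c' j ∈ R := by
        by_cases h1 : j = c
        · subst h1; rw [Equiv.swap_apply_left]; exact hc'
        · by_cases h2 : j = c'
          · subst h2; rw [Equiv.swap_apply_right]; exact hc
          · rw [Equiv.swap_apply_of_ne_of_ne h1 h2]; exact hj
      exact hπ.2 _ hjR
    calc A.card = (A.image (fun π => Equiv.swap c c' * π)).card := by
          rw [Finset.card_image_of_injective _ (mul_right_injective _)]
      _ ≤ (B c').card := Finset.card_le_card himg
  have hdisj : ∀ c₁ ∈ R, ∀ c₂ ∈ R, c₁ ≠ c₂ → Disjoint (B c₁) (B c₂) := by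
    intro c₁ h₁ c₂ h₂ hne
    rw [Finset.disjoint_left]
    intro τ hτ1 hτ2
    rw [hB, Finset.mem_filter] at hτ1 hτ2
    have e1 := hτ1.2 c₂ h₂
    have e2 := hτ2.2 c₁ h₁
    exact hne (τ.symm.injective (le_antisymm e1 e2))
  have hbu : ∑ c' ∈ R, (B c').card = (R.biUnion B).card :=
    (Finset.card_biUnion hdisj).symm
  calc A.card * R.card = ∑ _c' ∈ R, A.card := by rw [Finset.sum_const, smul_eq_mul, mul_comm]
    _ ≤ ∑ c' ∈ R, (B c').card := Finset.sum_le_sum hcardB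
    _ = (R.biUnion B).card := hbu
    _ ≤ Fintype.card (Equiv.Perm (Fin k)) := Finset.card_le_card (Finset.subset_univ _) |>.trans_eq (Finset.card_univ)
    _ = Nat.factorial k := by rw [Fintype.card_perm, Fintype.card_fin]

lemma ckr_split_witness {V : Type*} (k : ℕ) (hk : 0 < k) (x : V → Fin k → ℝ)
    (e : Finset V) (he : e.Nonempty) (π : Equiv.Perm (Fin k)) (θ : ℝ)
    (hsplit : ¬ ∃ j : Fin k, ∀ v ∈ e, ckrPos k hk x π θ v = j) :
    ∃ c : Fin k, e.inf' he (fun v => x v c) < θ ∧ θ ≤ e.sup' he (fun v => x v c) ∧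
      ∀ j : Fin k, θ ≤ e.sup' he (fun v => x v j) → π.symm c ≤ π.symm j := by
  classical
  set P : V → Finset (Fin k) := fun v =>
    Finset.univ.filter (fun i : Fin k => (i : ℕ) < k - 1 ∧ θ ≤ x v (π i)) with hP
  have hckr : ∀ v, ckrPos k hk x π θ v =
      if h : (P v).Nonempty then (P v).min' h else ⟨k - 1, Nat.sub_lt hk one_pos⟩ := by
    intro v; rfl
  set p := e.inf' he (fun v => ckrPos k hk x π θ v) with hp
  obtain ⟨u, hu, hup⟩ := Finset.exists_mem_eq_inf' he (fun v => ckrPos k hk x π θ v)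
  rw [← hp] at hup
  have hple : ∀ v ∈ e, p ≤ ckrPos k hk x π θ v := fun v hv => Finset.inf'_le _ hv
  -- p < k - 1
  have hpk : (p : ℕ) < k - 1 := by
    by_contra hcon
    have hptop : (p : ℕ) = k - 1 := by
      have := p.isLt; omega
    apply hsplit
    refine ⟨p, fun v hv => ?_⟩
    have h1 := hple v hv
    have h2 : ((ckrPos k hk x π θ v : Fin k) : ℕ) ≤ k - 1 := by
      have := (ckrPos k hk x π θ v).isLt; omega
    have h3 : (p : ℕ) ≤ ((ckrPos k hk x π θ v : Fin k) : ℕ) := h1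
    exact (Fin.ext (by omega)).symm
  -- p ∈ P u
  have hpPu : p ∈ P u := by
    by_cases h : (P u).Nonempty
    · rw [hckr u, dif_pos h] at hup
      rw [hup]; exact (P u).min'_mem h
    · rw [hckr u, dif_neg h] at hup
      exfalso
      have : (p : ℕ) = k - 1 := by rw [hup]
      omega
  rw [hP, Finset.mem_filter] at hpPu
  obtain ⟨-, -, hucap⟩ := hpPu
  refine ⟨π p, ?_, ?_, ?_⟩
  · -- some w not captured at p
    push_neg at hsplit
    obtain ⟨w, hw, hwne⟩ := hsplit p
    have hpw : p < ckrPos k hk x π θ w := lt_of_le_of_ne (hple w hw) (Ne.symm hwne)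
    have hpnot : p ∉ P w := by
      intro hmem
      have hne : (P w).Nonempty := ⟨p, hmem⟩
      have := (P w).min'_le p hmem
      rw [hckr w, dif_pos hne] at hpw
      exact absurd this (not_le.mpr hpw)
    rw [hP, Finset.mem_filter] at hpnot
    push_neg at hpnot
    have hxw : x w (π p) < θ := by
      have := hpnot (Finset.mem_univ p)
      exact lt_of_not_ge (fun hle => absurd hle (by simpa [hpk] using this))
    exact lt_of_le_of_lt (Finset.inf'_le (fun v => x v (π p)) hw) hxw
  · exact le_trans hucap (Finset.le_sup' (fun v => x v (π p)) hu)
  · intro j hj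
    rw [Finset.le_sup'_iff] at hj
    obtain ⟨w', hw', hw'j⟩ := hj
    have hps : π.symm (π p) = p := Equiv.symm_apply_apply π p
    rw [hps]
    set q := π.symm j with hq
    have hjq : π q = j := Equiv.apply_symm_apply π j
    by_cases hqk : (q : ℕ) < k - 1
    · have hqmem : q ∈ P w' := by
        rw [hP, Finset.mem_filter]
        exact ⟨Finset.mem_univ _, hqk, by rw [hjq]; exact hw'j⟩
      have hne : (P w').Nonempty := ⟨q, hqmem⟩
      have h1 : ckrPos k hk x π θ w' ≤ q := by
        rw [hckr w', dif_pos hne]; exact (P w').min'_le q hqmem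
      exact le_trans (hple w' hw') h1
    · have : (q : ℕ) = k - 1 := by have := q.isLt; omega
      exact Fin.le_def.mpr (by omega)

theorem ckr_rounding_split_probability
    {V : Type*} [Fintype V] [DecidableEq V]
    (k : ℕ) (hk : 0 < k) (s : Fin k → V) (hs : Function.Injective s)
    (x : V → Fin k → ℝ)
    (hx01 : ∀ v i, x v i ∈ Set.Icc (0:ℝ) 1)
    (hxsum : ∀ v, ∑ i, x v i = 1)
    (hterm : ∀ i, x (s i) i = 1)
    (e : Finset V) (he : e.Nonempty) (re : V) (hre : re ∈ e) :
    (∑ π : Equiv.Perm (Fin k),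
        (MeasureTheory.volume
          {θ : ℝ | θ ∈ Set.Ico (0:ℝ) 1 ∧
            ¬ ∃ j : Fin k, ∀ v ∈ e, ckrPos k hk x π θ v = j}).toReal)
      / (Nat.factorial k : ℝ)
      ≤ (∑ j ∈ Finset.range e.card, (1 : ℝ) / (j + 1))
          * ∑ i, (x re i - fmin e (fun v => x v i)) := by
  classical
  set α : Fin k → ℝ := fun i => e.inf' he (fun v => x v i) with hα
  set β : Fin k → ℝ := fun i => e.sup' he (fun v => x v i) with hβ
  have hαle : ∀ v ∈ e, ∀ c, α c ≤ x v c := fun v hv c => Finset.inf'_le (fun u => x u c) hv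
  have hαβ : ∀ c, α c ≤ β c := by
    intro c
    obtain ⟨u0, hu0⟩ := he
    exact le_trans (Finset.inf'_le (fun u => x u c) hu0) (Finset.le_sup' (fun u => x u c) hu0)
  set H : ℝ := ∑ j ∈ Finset.range e.card, (1 : ℝ) / (j + 1) with hH
  set D : ℝ := ∑ i, (x re i - α i) with hD
  have hfmin : ∀ i, fmin e (fun v => x v i) = α i := fun i => dif_pos he
  have hDv : ∀ v ∈ e, ∑ i, (x v i - α i) = D := by
    intro v hv
    rw [hD, Finset.sum_sub_distrib, Finset.sum_sub_distrib, hxsum v, hxsum re]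
  have hD0 : 0 ≤ D := by
    rw [hD]
    exact Finset.sum_nonneg fun i _ => sub_nonneg.mpr (hαle re hre i)
  set len : Fin k → ℝ := fun c => max 0 (min (β c) 1 - α c) with hlen
  have hlen0 : ∀ c, 0 ≤ len c := fun c => le_max_left _ _
  have hlenle : ∀ c, len c ≤ β c - α c := fun c =>
    max_le (sub_nonneg.mpr (hαβ c)) (sub_le_sub_right (min_le_left _ _) _)
  set First : Equiv.Perm (Fin k) → Fin k → Prop :=
    fun π c => ∀ j : Fin k, β c ≤ β j → π.symm c ≤ π.symm j with hFirst
  -- per-permutation volume bound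
  have volb : ∀ π : Equiv.Perm (Fin k),
      (MeasureTheory.volume
          {θ : ℝ | θ ∈ Set.Ico (0:ℝ) 1 ∧
            ¬ ∃ j : Fin k, ∀ v ∈ e, ckrPos k hk x π θ v = j}).toReal
        ≤ ∑ c : Fin k, (if First π c then len c else 0) := by
    intro π
    have hsub : {θ : ℝ | θ ∈ Set.Ico (0:ℝ) 1 ∧
            ¬ ∃ j : Fin k, ∀ v ∈ e, ckrPos k hk x π θ v = j}
        ⊆ ⋃ c : Fin k, (if First π c then Set.Ioc (α c) (min (β c) 1) else ∅) := by
      intro θ hθ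
      obtain ⟨hθI, hθs⟩ := hθ
      obtain ⟨c, h1, h2, h3⟩ := ckr_split_witness k hk x e he π θ hθs
      refine Set.mem_iUnion.mpr ⟨c, ?_⟩
      have hf : First π c := fun j hj => h3 j (le_trans h2 hj)
      rw [if_pos hf]
      exact ⟨h1, le_min h2 (le_of_lt hθI.2)⟩
    have hv : MeasureTheory.volume {θ : ℝ | θ ∈ Set.Ico (0:ℝ) 1 ∧
            ¬ ∃ j : Fin k, ∀ v ∈ e, ckrPos k hk x π θ v = j}
        ≤ ENNReal.ofReal (∑ c : Fin k, (if First π c then len c else 0)) := by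
      refine le_trans (MeasureTheory.measure_mono hsub) ?_
      refine le_trans (MeasureTheory.measure_iUnion_fintype_le _ _) ?_
      have hofr : ENNReal.ofReal (∑ c : Fin k, (if First π c then len c else 0))
          = ∑ c : Fin k, ENNReal.ofReal (if First π c then len c else 0) := by
        refine ENNReal.ofReal_sum_of_nonneg fun c _ => ?_
        by_cases hf : First π c
        · rw [if_pos hf]; exact hlen0 c
        · rw [if_neg hf]
      rw [hofr]
      apply Finset.sum_le_sum
      intro c _
      by_cases hf : First π c
      · rw [if_pos hf, if_pos hf, Real.volume_Ioc]
        exact ENNReal.ofReal_le_ofReal (le_max_right _ _)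
      · rw [if_neg hf, if_neg hf]
        simp
    refine ENNReal.toReal_le_of_le_ofReal ?_ hv
    refine Finset.sum_nonneg fun c _ => ?_
    by_cases hf : First π c
    · rw [if_pos hf]; exact hlen0 c
    · rw [if_neg hf]
  set N : Fin k → ℕ :=
    fun c => (Finset.univ.filter (fun π : Equiv.Perm (Fin k) => First π c)).card with hN
  have sum1 : ∑ π : Equiv.Perm (Fin k), ∑ c : Fin k, (if First π c then len c else 0)
      = ∑ c : Fin k, (N c : ℝ) * len c := by
    rw [Finset.sum_comm]
    refine Finset.sum_congr rfl fun c _ => ?_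
    rw [← Finset.sum_filter, Finset.sum_const, hN, nsmul_eq_mul]
  -- ranks
  set g : Equiv.Perm (Fin k) := Tuple.sort β with hg
  set r : Fin k → ℕ := fun c => k - (g.symm c : ℕ) with hr
  have hr1 : ∀ c, 1 ≤ r c := by
    intro c
    have := (g.symm c).isLt
    simp only [hr]
    omega
  have hrinj : Function.Injective r := by
    intro a b hab
    have ha := (g.symm a).isLt
    have hb := (g.symm b).isLt
    simp only [hr] at hab
    have hvv : ((g.symm a : ℕ)) = ((g.symm b : ℕ)) := by omega
    exact g.symm.injective (Fin.ext hvv)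
  have hNr : ∀ c, (N c) * (r c) ≤ Nat.factorial k := by
    intro c
    set R : Finset (Fin k) := Finset.univ.filter (fun j => β c ≤ β j) with hR
    have hcR : c ∈ R := Finset.mem_filter.mpr ⟨Finset.mem_univ _, le_refl _⟩
    have hNle : N c ≤ (Finset.univ.filter
        (fun π : Equiv.Perm (Fin k) => ∀ j ∈ R, π.symm c ≤ π.symm j)).card := by
      show (Finset.univ.filter (fun π : Equiv.Perm (Fin k) => First π c)).card ≤ _
      refine Finset.card_le_card ?_
      intro π hπ
      rw [Finset.mem_filter] at hπ ⊢
      refine ⟨Finset.mem_univ _, fun j hj => ?_⟩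
      rw [hR, Finset.mem_filter] at hj
      exact hπ.2 j hj.2
    have h1 : (Finset.univ.filter
        (fun π : Equiv.Perm (Fin k) => ∀ j ∈ R, π.symm c ≤ π.symm j)).card * R.card
        ≤ Nat.factorial k := perm_count R hcR
    have h2 : r c ≤ R.card := by
      have hsub : (Finset.Ici (g.symm c)).image g ⊆ R := by
        intro j hj
        rw [Finset.mem_image] at hj
        obtain ⟨q, hq, rfl⟩ := hj
        rw [Finset.mem_Ici] at hq
        rw [hR, Finset.mem_filter]
        refine ⟨Finset.mem_univ _, ?_⟩
        have hmono := Tuple.monotone_sort β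
        have h : β (g (g.symm c)) ≤ β (g q) := hmono hq
        simpa [Function.comp, Equiv.apply_symm_apply] using h
      calc r c = (Finset.Ici (g.symm c)).card := by rw [Fin.card_Ici]
        _ = ((Finset.Ici (g.symm c)).image g).card :=
            (Finset.card_image_of_injective _ g.injective).symm
        _ ≤ R.card := Finset.card_le_card hsub
    exact le_trans (Nat.mul_le_mul hNle h2) h1
  -- witnesses for sup'
  choose w hw hwx using fun c => Finset.exists_mem_eq_sup' he (fun v => x v c)
  set G : V → Finset (Fin k) := fun v => Finset.univ.filter (fun c => w c = v) with hG
  have hsumfib : ∑ v ∈ e, ∑ c ∈ G v, len c / r c = ∑ c : Fin k, len c / r c :=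
    Finset.sum_fiberwise_of_maps_to (fun c _ => hw c) _
  set ρ : V → ℕ := fun v => if h : (G v).Nonempty then (G v).inf' h r else 1 with hρ
  have hρ1 : ∀ v, 1 ≤ ρ v := by
    intro v
    simp only [hρ]
    split
    · next h =>
      obtain ⟨c, hc, hceq⟩ := Finset.exists_mem_eq_inf' h r
      rw [hceq]; exact hr1 c
    · exact le_refl 1
  have hinner : ∀ v ∈ e, ∑ c ∈ G v, len c / r c
      ≤ (if (G v).Nonempty then D / ρ v else 0) := by
    intro v hv
    by_cases h : (G v).Nonempty
    · rw [if_pos h]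
      have hρv : ρ v = (G v).inf' h r := by simp only [hρ]; rw [dif_pos h]
      have hρpos : (0:ℝ) < ρ v := by exact_mod_cast hρ1 v
      have step1 : ∑ c ∈ G v, len c / r c ≤ ∑ c ∈ G v, len c * (1 / ρ v) := by
        refine Finset.sum_le_sum fun c hc => ?_
        rw [div_eq_mul_one_div]
        refine mul_le_mul_of_nonneg_left ?_ (hlen0 c)
        refine one_div_le_one_div_of_le hρpos ?_
        have : ρ v ≤ r c := by rw [hρv]; exact Finset.inf'_le r hc
        exact_mod_cast this
      have step2 : ∑ c ∈ G v, len c * (1 / ρ v) = (∑ c ∈ G v, len c) * (1 / ρ v) :=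
        (Finset.sum_mul _ _ _).symm
      have step3 : ∑ c ∈ G v, len c ≤ D := by
        have e1 : ∑ c ∈ G v, len c ≤ ∑ c ∈ G v, (x v c - α c) := by
          refine Finset.sum_le_sum fun c hc => ?_
          have hwc : w c = v := (Finset.mem_filter.mp hc).2
          have : β c = x v c := by rw [← hwc]; exact hwx c
          calc len c ≤ β c - α c := hlenle c
            _ = x v c - α c := by rw [this]
        have e2 : ∑ c ∈ G v, (x v c - α c) ≤ ∑ c : Fin k, (x v c - α c) := by
          refine Finset.sum_le_sum_of_subset_of_nonneg (Finset.subset_univ _)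
            fun c _ _ => sub_nonneg.mpr (hαle v hv c)
        calc ∑ c ∈ G v, len c ≤ ∑ c : Fin k, (x v c - α c) := le_trans e1 e2
          _ = D := hDv v hv
      calc ∑ c ∈ G v, len c / r c ≤ (∑ c ∈ G v, len c) * (1 / ρ v) := by
            rw [← step2]; exact step1
        _ ≤ D * (1 / ρ v) := by
            refine mul_le_mul_of_nonneg_right step3 (by positivity)
        _ = D / ρ v := by rw [mul_one_div]
    · rw [if_neg h]
      rw [Finset.not_nonempty_iff_eq_empty] at h
      rw [h, Finset.sum_empty]
  have hmain : ∑ c : Fin k, len c / r c ≤ H * D := by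
    rw [← hsumfib]
    set e' : Finset V := e.filter (fun v => (G v).Nonempty) with he'
    have c1 : ∑ v ∈ e, ∑ c ∈ G v, len c / r c
        ≤ ∑ v ∈ e, (if (G v).Nonempty then D / ρ v else 0) :=
      Finset.sum_le_sum hinner
    have c2 : ∑ v ∈ e, (if (G v).Nonempty then D / ρ v else 0)
        = ∑ v ∈ e', D / ρ v := (Finset.sum_filter _ _).symm
    have hinjOn : ∀ v ∈ e', ∀ v' ∈ e', ρ v = ρ v' → v = v' := by
      intro v hv v' hv' hvv
      have hnv : (G v).Nonempty := (Finset.mem_filter.mp hv).2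
      have hnv' : (G v').Nonempty := (Finset.mem_filter.mp hv').2
      obtain ⟨c, hc, hceq⟩ := Finset.exists_mem_eq_inf' hnv r
      obtain ⟨c', hc', hceq'⟩ := Finset.exists_mem_eq_inf' hnv' r
      have hρv : ρ v = r c := by simp only [hρ]; rw [dif_pos hnv]; exact hceq
      have hρv' : ρ v' = r c' := by simp only [hρ]; rw [dif_pos hnv']; exact hceq'
      have : r c = r c' := by rw [← hρv, ← hρv', hvv]
      have hcc : c = c' := hrinj this
      have h1 : w c = v := (Finset.mem_filter.mp hc).2
      have h2 : w c' = v' := (Finset.mem_filter.mp hc').2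
      rw [← h1, ← h2, hcc]
    have c3 : ∑ v ∈ e', (1:ℝ) / ρ v ≤ H := by
      have himg : ∑ m ∈ e'.image ρ, (1:ℝ)/m = ∑ v ∈ e', (1:ℝ) / ρ v :=
        Finset.sum_image hinjOn
      rw [← himg, hH]
      refine harmonic_aux e.card (e'.image ρ) ?_ ?_
      · intro m hm
        rw [Finset.mem_image] at hm
        obtain ⟨v, _, rfl⟩ := hm
        exact hρ1 v
      · exact le_trans Finset.card_image_le (Finset.card_filter_le _ _)
    calc ∑ v ∈ e, ∑ c ∈ G v, len c / r c ≤ ∑ v ∈ e', D / ρ v := by rw [← c2]; exact c1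
      _ = D * ∑ v ∈ e', (1:ℝ) / ρ v := by
          rw [Finset.mul_sum]
          exact Finset.sum_congr rfl fun v _ => by rw [div_eq_mul_one_div]
      _ ≤ D * H := mul_le_mul_of_nonneg_left c3 hD0
      _ = H * D := mul_comm _ _
  -- final assembly
  have hfact : (0:ℝ) < (Nat.factorial k : ℝ) := by positivity
  rw [div_le_iff₀ hfact]
  have hRHSeq : ∑ i, (x re i - fmin e (fun v => x v i)) = D := by
    rw [hD]
    exact Finset.sum_congr rfl fun i _ => by rw [hfmin i]
  rw [hRHSeq]
  calc (∑ π : Equiv.Perm (Fin k),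
        (MeasureTheory.volume
          {θ : ℝ | θ ∈ Set.Ico (0:ℝ) 1 ∧
            ¬ ∃ j : Fin k, ∀ v ∈ e, ckrPos k hk x π θ v = j}).toReal)
      ≤ ∑ π : Equiv.Perm (Fin k), ∑ c : Fin k, (if First π c then len c else 0) :=
        Finset.sum_le_sum fun π _ => volb π
    _ = ∑ c : Fin k, (N c : ℝ) * len c := sum1
    _ ≤ ∑ c : Fin k, (Nat.factorial k : ℝ) * (len c / r c) := by
        refine Finset.sum_le_sum fun c _ => ?_
        have hrpos : (0:ℝ) < (r c : ℝ) := by exact_mod_cast hr1 c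
        have h1 : (N c : ℝ) * (r c : ℝ) ≤ (Nat.factorial k : ℝ) := by
          exact_mod_cast hNr c
        have h2 : (N c : ℝ) ≤ (Nat.factorial k : ℝ) / (r c : ℝ) :=
          (le_div_iff₀ hrpos).mpr h1
        calc (N c : ℝ) * len c ≤ ((Nat.factorial k : ℝ) / (r c : ℝ)) * len c :=
              mul_le_mul_of_nonneg_right h2 (hlen0 c)
          _ = (Nat.factorial k : ℝ) * (len c / r c) := by ring
    _ = (Nat.factorial k : ℝ) * ∑ c : Fin k, len c / r c := by rw [Finset.mul_sum]
    _ ≤ (Nat.factorial k : ℝ) * (H * D) :=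
        mul_le_mul_of_nonneg_left hmain (le_of_lt hfact)
    _ = H * D * (Nat.factorial k : ℝ) := by ring
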